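/- Let Γ be a finite graph and let S be a finite set of pairwise independent odd cycles in Γ. Let Γ_S be the subgraph of Γ obtained by deleting all edges belonging to cycles of S, all vertices of those edges, and all edges of Γ incident to those vertices. Define i : L(Γ_S) → L(Γ) by extending each dimer labeling of Γ_S by the value 1/2 on all edges belonging to cycles of S and 0 on all other edges of Γ not in Γ_S. Then i is a topological embedding whose image is a union of path components of L(Γ); moreover, if Γ_S admits a dimer covering, then i(L₀(Γ_S)) is a single path component of L(Γ). -/

import Mathlib

/-! Finite-graph notions.  A finite graph `Γ = (E, V, ∂)` is given by finite types
`E` (edges) and `V` (vertices) and a boundary map `bd : E → Finset V` with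
`(bd e).card = 2` for every edge `e` (multiple edges allowed, loops excluded).
A vertex `v` is incident to an edge `e` if `v ∈ bd e`. -/

variable {E V : Type*}

/-- A set `s ⊆ E` is cyclic if every vertex is incident to exactly two or to zero
edges of `s`. -/
def IsCyclicSet (bd : E → Finset V) (s : Set E) : Prop :=
  ∀ v : V, {e ∈ s | v ∈ bd e}.ncard = 2 ∨ {e ∈ s | v ∈ bd e} = ∅

/-- A cycle is a minimal nonempty cyclic set. -/
def IsCycle (bd : E → Finset V) (s : Set E) : Prop :=
  IsCyclicSet bd s ∧ s.Nonempty ∧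
    ∀ t ⊆ s, IsCyclicSet bd t → t.Nonempty → t = s

/-- Two sets of edges are independent if no vertex is incident both to an edge of
the first set and to an edge of the second set. -/
def Indep (bd : E → Finset V) (s t : Set E) : Prop :=
  ∀ v : V, ¬ ((∃ e ∈ s, v ∈ bd e) ∧ (∃ e ∈ t, v ∈ bd e))

/-- A half-set: any two distinct edges in it have disjoint boundaries. -/
def IsHalfSet (bd : E → Finset V) (t : Set E) : Prop :=
  ∀ e ∈ t, ∀ f ∈ t, e ≠ f → ∀ v : V, ¬ (v ∈ bd e ∧ v ∈ bd f)

/-- `s', s''` form a partition of `s` into two halves. -/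
def AreHalves (bd : E → Finset V) (s s' s'' : Set E) : Prop :=
  s' ∪ s'' = s ∧ Disjoint s' s'' ∧ IsHalfSet bd s' ∧ IsHalfSet bd s''

/-- A cycle is even if it admits a partition into two halves. -/
def IsEvenCycle (bd : E → Finset V) (s : Set E) : Prop :=
  IsCycle bd s ∧ ∃ s' s'' : Set E, AreHalves bd s s' s''

/-- A dimer covering: a set of edges such that every vertex is incident to exactly
one edge of it. -/
def IsDimer (bd : E → Finset V) (A : Set E) : Prop :=
  ∀ v : V, ∃! e : E, e ∈ A ∧ v ∈ bd e

/-- The dimer labeling associated with a dimer covering `A`: the characteristic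
function of `A`. -/
noncomputable def dimerDelta (A : Set E) : E → ℝ :=
  A.indicator fun _ => 1

/-- A dimer labeling: a labeling of the edges by numbers in `[0,1]` such that at
every vertex the labels of the incident edges sum to `1` and at most two of these
labels are nonzero. -/
def IsDimerLabeling (bd : E → Finset V) (l : E → ℝ) : Prop :=
  (∀ e, l e ∈ Set.Icc (0 : ℝ) 1) ∧
  (∀ v : V, ∑ᶠ e ∈ {e : E | v ∈ bd e}, l e = 1) ∧
  (∀ v : V, {e : E | v ∈ bd e ∧ l e ≠ 0}.ncard ≤ 2)

/-- The space `L(Γ)` of dimer labelings, topologized as a subspace of `[0,1]^E`. -/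
abbrev DimerLab (bd : E → Finset V) : Type _ :=
  {l : E → ℝ // IsDimerLabeling bd l}

/-- The dimer space `L₀(Γ)`: the path component of a basepoint (a dimer labeling
associated with a dimer covering) in `L(Γ)`. -/
abbrev DimerSpace (bd : E → Finset V) (x₀ : DimerLab bd) : Type _ :=
  {l : DimerLab bd // l ∈ pathComponent x₀}

/-- The canonical basepoint of the dimer space. -/
noncomputable def DimerSpace.base (bd : E → Finset V) (x₀ : DimerLab bd) :
    DimerSpace bd x₀ :=
  ⟨x₀, mem_pathComponent_self x₀⟩

/-- A cycle is odd if it is not even. -/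
def IsOddCycle (bd : E → Finset V) (s : Set E) : Prop :=
  IsCycle bd s ∧ ¬ ∃ s' s'' : Set E, AreHalves bd s s' s''

/-- The vertices deleted when forming `Γ_S`: the vertices of the edges belonging to
the cycles of `S`. -/
def delVertices (bd : E → Finset V) (S : Set (Set E)) : Set V :=
  {v | ∃ c ∈ S, ∃ e ∈ c, v ∈ bd e}

/-- The edges of the subgraph `Γ_S`: edges not belonging to a cycle of `S` and not
incident to a deleted vertex. -/
abbrev SubEdge (bd : E → Finset V) (S : Set (Set E)) : Type _ :=
  {e : E // e ∉ ⋃₀ S ∧ ∀ v ∈ bd e, v ∉ delVertices bd S}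

/-- The vertices of the subgraph `Γ_S`. -/
abbrev SubVertex (bd : E → Finset V) (S : Set (Set E)) : Type _ :=
  {v : V // v ∉ delVertices bd S}

open Classical in
/-- The boundary map of the subgraph `Γ_S`. -/
noncomputable def subBd (bd : E → Finset V) (S : Set (Set E)) :
    SubEdge bd S → Finset (SubVertex bd S) :=
  fun e => (bd e.1).subtype fun v => v ∉ delVertices bd S

open Classical in
/-- Extension of a labeling of `Γ_S` to `Γ`: value `1/2` on the edges of the cycles
of `S` and `0` on all other edges of `Γ` not in `Γ_S`. -/
noncomputable def extLab (bd : E → Finset V) (S : Set (Set E))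
    (l : SubEdge bd S → ℝ) : E → ℝ := fun e =>
  if e ∈ ⋃₀ S then 1 / 2
  else if h : e ∉ ⋃₀ S ∧ ∀ v ∈ bd e, v ∉ delVertices bd S then l ⟨e, h⟩ else 0

section Aux

variable (bd : E → Finset V) (S : Set (Set E))

open Classical in
private lemma finsum_mem_eq_sum'' [Fintype E] (f : E → ℝ) (s : Set E) :
    ∑ᶠ e ∈ s, f e = ∑ e ∈ Finset.univ.filter (· ∈ s), f e := by
  classical
  rw [← finsum_mem_coe_finset]
  congr 1
  ext e; simp

private lemma finsum_mem_zero_subset [Fintype E] (f : E → ℝ) {s t : Set E} (hts : t ⊆ s)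
    (h0 : ∀ e ∈ s, e ∉ t → f e = 0) : ∑ᶠ e ∈ s, f e = ∑ᶠ e ∈ t, f e := by
  classical
  rw [finsum_mem_eq_sum'' f s, finsum_mem_eq_sum'' f t]
  refine (Finset.sum_subset ?_ ?_).symm
  · intro e he
    simp only [Finset.mem_filter, Finset.mem_univ, true_and] at he ⊢
    exact hts he
  · intro e hes het
    simp only [Finset.mem_filter, Finset.mem_univ, true_and] at hes het
    exact h0 e hes het

private lemma extLab_of_mem {l : SubEdge bd S → ℝ} {e : E} (he : e ∈ ⋃₀ S) :
    extLab bd S l e = 1 / 2 := by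
  simp only [extLab, if_pos he]

private lemma extLab_subEdge {l : SubEdge bd S → ℝ} (e : SubEdge bd S) :
    extLab bd S l e.1 = l e := by
  simp only [extLab, if_neg e.2.1, dif_pos e.2]

private lemma extLab_of_not {l : SubEdge bd S → ℝ} {e : E} (h1 : e ∉ ⋃₀ S)
    (h2 : ∃ v ∈ bd e, v ∈ delVertices bd S) : extLab bd S l e = 0 := by
  simp only [extLab, if_neg h1]
  rw [dif_neg]
  rintro ⟨-, hall⟩
  obtain ⟨v, hv, hdel⟩ := h2
  exact hall v hv hdel

/-- At a deleted vertex, the ambient cycle has exactly two incident edges. -/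
private lemma del_pair (hodd : ∀ s ∈ S, IsOddCycle bd s) {v : V} {c : Set E}
    (hc : c ∈ S) (hvc : ∃ e ∈ c, v ∈ bd e) :
    {e | e ∈ c ∧ v ∈ bd e}.ncard = 2 := by
  rcases (hodd c hc).1.1 v with h | h
  · exact h
  · exfalso
    obtain ⟨e, hec, hve⟩ := hvc
    have : e ∈ {e ∈ c | v ∈ bd e} := ⟨hec, hve⟩
    rw [h] at this
    exact this

/-- A vertex cannot be incident to edges of two distinct cycles of `S`. -/
private lemma unique_cycle (hindep : S.Pairwise (Indep bd)) {v : V} {c c' : Set E}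
    (hc : c ∈ S) (hc' : c' ∈ S) {e e' : E} (he : e ∈ c) (hve : v ∈ bd e)
    (he' : e' ∈ c') (hve' : v ∈ bd e') : c = c' := by
  by_contra hne
  exact hindep hc hc' hne v ⟨⟨e, he, hve⟩, ⟨e', he', hve'⟩⟩

/-- For a dimer labeling nonzero on all cycle edges, the nonzero incident edges at a
deleted vertex are exactly the two cycle edges. -/
private lemma nonzero_eq_pair [Fintype E] (hodd : ∀ s ∈ S, IsOddCycle bd s)
    {m : E → ℝ} (hm : IsDimerLabeling bd m) (hnz : ∀ e ∈ ⋃₀ S, m e ≠ 0)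
    {v : V} {c : Set E} (hc : c ∈ S) (hvc : ∃ e ∈ c, v ∈ bd e) :
    {e | v ∈ bd e ∧ m e ≠ 0} = {e | e ∈ c ∧ v ∈ bd e} := by
  have h2 := del_pair bd S hodd hc hvc
  refine (Set.eq_of_subset_of_ncard_le ?_ ?_ (Set.toFinite _)).symm
  · rintro e ⟨hec, hve⟩
    exact ⟨hve, hnz e ⟨c, hc, hec⟩⟩
  · rw [h2]; exact hm.2.2 v

private lemma pair_sum [Fintype E] {m : E → ℝ} (hm : IsDimerLabeling bd m)
    {v : V} {a b : E} (hab : a ≠ b) (hva : v ∈ bd a) (hvb : v ∈ bd b)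
    (hz : ∀ e, v ∈ bd e → e ≠ a → e ≠ b → m e = 0) : m a + m b = 1 := by
  have := hm.2.1 v
  rw [finsum_mem_zero_subset m (t := {a, b})
      (by rintro e (rfl | rfl) <;> [exact hva; exact hvb])
      (by intro e hve he
          simp only [Set.mem_insert_iff, Set.mem_singleton_iff, not_or] at he
          exact hz e hve he.1 he.2)] at this
  rwa [finsum_mem_pair hab] at this

/-- Odd-cycle rigidity: if around the cycle any two distinct incident edges sum to 1,
then all edge values are 1/2. -/
private lemma odd_rigid {c : Set E} (hc : IsOddCycle bd c) (x : E → ℝ)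
    (H : ∀ (v : V) (e f : E), e ∈ c → f ∈ c → e ≠ f → v ∈ bd e → v ∈ bd f →
      x e + x f = 1) :
    ∀ e ∈ c, x e = 1 / 2 := by
  by_cases hne : {e | e ∈ c ∧ x e = 1 / 2}.Nonempty
  · have hcyc : IsCyclicSet bd {e | e ∈ c ∧ x e = 1 / 2} := by
      intro v
      rcases hc.1.1 v with h2 | h0
      · obtain ⟨a, b, hab, hset⟩ := Set.ncard_eq_two.mp h2
        have ha : a ∈ c ∧ v ∈ bd a := by
          have : a ∈ {e ∈ c | v ∈ bd e} := hset ▸ (by left; rfl)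
          exact this
        have hb : b ∈ c ∧ v ∈ bd b := by
          have : b ∈ {e ∈ c | v ∈ bd e} := hset ▸ (by right; rfl)
          exact this
        have hsum := H v a b ha.1 hb.1 hab ha.2 hb.2
        by_cases hxa : x a = 1 / 2
        · have hxb : x b = 1 / 2 := by linarith
          left
          have : {e ∈ {e | e ∈ c ∧ x e = 1 / 2} | v ∈ bd e} = {a, b} := by
            ext e
            constructor
            · rintro ⟨⟨hec, _⟩, hve⟩
              have : e ∈ {e ∈ c | v ∈ bd e} := ⟨hec, hve⟩
              rw [hset] at this
              exact this
            · rintro (rfl | rfl)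
              · exact ⟨⟨ha.1, hxa⟩, ha.2⟩
              · exact ⟨⟨hb.1, hxb⟩, hb.2⟩
          rw [this]
          exact Set.ncard_pair hab
        · have hxb : x b ≠ 1 / 2 := fun h => hxa (by linarith)
          right
          ext e
          simp only [Set.mem_setOf_eq, Set.mem_empty_iff_false, iff_false]
          rintro ⟨⟨hec, hxe⟩, hve⟩
          have : e ∈ {e ∈ c | v ∈ bd e} := ⟨hec, hve⟩
          rw [hset] at this
          rcases this with rfl | rfl
          · exact hxa hxe
          · exact hxb hxe
      · right
        ext e
        simp only [Set.mem_setOf_eq, Set.mem_empty_iff_false, iff_false]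
        rintro ⟨⟨hec, _⟩, hve⟩
        have : e ∈ {e ∈ c | v ∈ bd e} := ⟨hec, hve⟩
        rw [h0] at this
        exact this
    have heq := hc.1.2.2 _ (fun e he => he.1) hcyc hne
    intro e hec
    have : e ∈ {e | e ∈ c ∧ x e = 1 / 2} := by rw [heq]; exact hec
    exact this.2
  · exfalso
    apply hc.2
    refine ⟨{e | e ∈ c ∧ 1 / 2 < x e}, {e | e ∈ c ∧ x e < 1 / 2}, ?_, ?_, ?_, ?_⟩
    · ext e
      simp only [Set.mem_union, Set.mem_setOf_eq]
      constructor
      · rintro (⟨h, _⟩ | ⟨h, _⟩) <;> exact h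
      · intro hec
        have hxe : x e ≠ 1 / 2 := fun h => hne ⟨e, hec, h⟩
        rcases lt_trichotomy (x e) (1 / 2) with h | h | h
        · right; exact ⟨hec, h⟩
        · exact absurd h hxe
        · left; exact ⟨hec, h⟩
    · rw [Set.disjoint_left]
      rintro e ⟨_, h1⟩ ⟨_, h2⟩
      linarith
    · rintro e ⟨hec, he⟩ f ⟨hfc, hf⟩ hef v ⟨hve, hvf⟩
      have := H v e f hec hfc hef hve hvf
      linarith
    · rintro e ⟨hec, he⟩ f ⟨hfc, hf⟩ hef v ⟨hve, hvf⟩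
      have := H v e f hec hfc hef hve hvf
      linarith

/-- Core rigidity: a dimer labeling that is nonzero on all cycle edges equals 1/2 on
cycle edges and 0 on edges adjacent to deleted vertices. -/
private lemma core_rigid [Fintype E] (hodd : ∀ s ∈ S, IsOddCycle bd s)
    (hindep : S.Pairwise (Indep bd)) {m : E → ℝ} (hm : IsDimerLabeling bd m)
    (hnz : ∀ e ∈ ⋃₀ S, m e ≠ 0) :
    (∀ e ∈ ⋃₀ S, m e = 1 / 2) ∧
      ∀ e, e ∉ ⋃₀ S → (∃ v ∈ bd e, v ∈ delVertices bd S) → m e = 0 := by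
  have hpairsum : ∀ (v : V) (c : Set E), c ∈ S → (∃ e ∈ c, v ∈ bd e) →
      ∀ e f : E, e ∈ c → f ∈ c → e ≠ f → v ∈ bd e → v ∈ bd f → m e + m f = 1 := by
    intro v c hc hvc e f hec hfc hef hve hvf
    obtain ⟨a, b, hab, hset⟩ := Set.ncard_eq_two.mp (del_pair bd S hodd hc hvc)
    have hnzp := nonzero_eq_pair bd S hodd hm hnz hc hvc
    have hz : ∀ g, v ∈ bd g → g ≠ a → g ≠ b → m g = 0 := by
      intro g hvg hga hgb
      by_contra hg
      have : g ∈ {e | e ∈ c ∧ v ∈ bd e} := by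
        rw [← hnzp]; exact ⟨hvg, hg⟩
      rw [hset] at this
      rcases this with rfl | rfl
      · exact hga rfl
      · exact hgb rfl
    have hva : v ∈ bd a := by
      have : a ∈ {e ∈ c | v ∈ bd e} := hset ▸ (by left; rfl)
      exact this.2
    have hvb : v ∈ bd b := by
      have : b ∈ {e ∈ c | v ∈ bd e} := hset ▸ (by right; rfl)
      exact this.2
    have hsum := pair_sum bd hm hab hva hvb hz
    have hepair : e ∈ ({a, b} : Set E) := by
      have : e ∈ {e ∈ c | v ∈ bd e} := ⟨hec, hve⟩
      rwa [hset] at this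
    have hfpair : f ∈ ({a, b} : Set E) := by
      have : f ∈ {e ∈ c | v ∈ bd e} := ⟨hfc, hvf⟩
      rwa [hset] at this
    rcases hepair with rfl | rfl <;> rcases hfpair with rfl | rfl
    · exact absurd rfl hef
    · exact hsum
    · linarith
    · exact absurd rfl hef
  constructor
  · rintro e ⟨c, hc, hec⟩
    refine odd_rigid bd (hodd c hc) m ?_ e hec
    intro v e' f' he' hf' hef hve hvf
    exact hpairsum v c hc ⟨e', he', hve⟩ e' f' he' hf' hef hve hvf
  · rintro e heS ⟨v, hve, c, hc, e₀, he₀, hve₀⟩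
    have hnzp := nonzero_eq_pair bd S hodd hm hnz hc ⟨e₀, he₀, hve₀⟩
    by_contra hg
    have : e ∈ {e | e ∈ c ∧ v ∈ bd e} := by
      rw [← hnzp]; exact ⟨hve, hg⟩
    exact heS ⟨c, hc, this.1⟩

private lemma mem_subBd {e : SubEdge bd S} {w : SubVertex bd S} :
    w ∈ subBd bd S e ↔ (w : V) ∈ bd e.1 := by
  simp [subBd]

/-- Extension of a dimer labeling of the subgraph is a dimer labeling. -/
private lemma extLab_isDimerLabeling [Fintype E] (hodd : ∀ s ∈ S, IsOddCycle bd s)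
    (hindep : S.Pairwise (Indep bd)) {l : SubEdge bd S → ℝ}
    (hl : IsDimerLabeling (subBd bd S) l) : IsDimerLabeling bd (extLab bd S l) := by
  refine ⟨?_, ?_, ?_⟩
  · intro e
    simp only [extLab]
    split_ifs with h1 h2
    · constructor <;> norm_num
    · exact hl.1 _
    · constructor <;> norm_num
  all_goals {
    intro v
    by_cases hv : v ∈ delVertices bd S
    · obtain ⟨c, hc, e₀, he₀, hve₀⟩ := hv
      obtain ⟨a, b, hab, hset⟩ :=
        Set.ncard_eq_two.mp (del_pair bd S hodd hc ⟨e₀, he₀, hve₀⟩)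
      have ha : a ∈ c ∧ v ∈ bd a := by
        have : a ∈ {e ∈ c | v ∈ bd e} := hset ▸ (by left; rfl)
        exact this
      have hb : b ∈ c ∧ v ∈ bd b := by
        have : b ∈ {e ∈ c | v ∈ bd e} := hset ▸ (by right; rfl)
        exact this
      have hz : ∀ e, v ∈ bd e → e ≠ a → e ≠ b → extLab bd S l e = 0 := by
        intro e hve hea heb
        by_cases heS : e ∈ ⋃₀ S
        · obtain ⟨c', hc', hec'⟩ := heS
          have hcc : c = c' := unique_cycle bd S hindep hc hc' he₀ hve₀ hec' hve
          subst hcc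
          have : e ∈ {e ∈ c | v ∈ bd e} := ⟨hec', hve⟩
          rw [hset] at this
          rcases this with rfl | rfl
          · exact absurd rfl hea
          · exact absurd rfl heb
        · exact extLab_of_not bd S heS ⟨v, hve, c, hc, e₀, he₀, hve₀⟩
      first
      | (rw [finsum_mem_zero_subset _ (t := {a, b})
              (by rintro e (rfl | rfl) <;> [exact ha.2; exact hb.2])
              (by intro e hve he
                  simp only [Set.mem_insert_iff, Set.mem_singleton_iff, not_or] at he
                  exact hz e hve he.1 he.2),
            finsum_mem_pair hab,
            extLab_of_mem bd S ⟨c, hc, ha.1⟩, extLab_of_mem bd S ⟨c, hc, hb.1⟩]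
         norm_num)
      | (refine le_trans (Set.ncard_le_ncard (t := ({a, b} : Set E)) ?_ (Set.toFinite _)) ?_
         · rintro e ⟨hve, hne⟩
           by_contra hmem
           simp only [Set.mem_insert_iff, Set.mem_singleton_iff, not_or] at hmem
           exact hne (hz e hve hmem.1 hmem.2)
         · rw [Set.ncard_pair hab])
    · have hnotS : ∀ e : E, v ∈ bd e → e ∉ ⋃₀ S := by
        intro e hve ⟨c, hc, hec⟩
        exact hv ⟨c, hc, e, hec, hve⟩
      first
      | (have himg : ∑ᶠ e ∈ {e : E | v ∈ bd e}, extLab bd S l e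
              = ∑ᶠ e ∈ (Subtype.val ''
                  {e' : SubEdge bd S | (⟨v, hv⟩ : SubVertex bd S) ∈ subBd bd S e'}),
                  extLab bd S l e := by
            refine finsum_mem_zero_subset _ ?_ ?_
            · rintro e ⟨e', he', rfl⟩
              exact (mem_subBd bd S).mp he'
            · intro e hve hni
              by_cases h : e ∉ ⋃₀ S ∧ ∀ v' ∈ bd e, v' ∉ delVertices bd S
              · exfalso
                exact hni ⟨⟨e, h⟩, (mem_subBd bd S).mpr hve, rfl⟩
              · push_neg at h
                exact extLab_of_not bd S (hnotS e hve) (h (hnotS e hve))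
         rw [himg, finsum_mem_image (Set.injOn_of_injective Subtype.val_injective)]
         rw [finsum_mem_congr rfl (fun e' _ => extLab_subEdge bd S e')]
         exact hl.2.1 ⟨v, hv⟩)
      | (have hseteq : {e : E | v ∈ bd e ∧ extLab bd S l e ≠ 0}
              = Subtype.val '' {e' : SubEdge bd S |
                  (⟨v, hv⟩ : SubVertex bd S) ∈ subBd bd S e' ∧ l e' ≠ 0} := by
            ext e
            constructor
            · rintro ⟨hve, hne⟩
              by_cases h : e ∉ ⋃₀ S ∧ ∀ v' ∈ bd e, v' ∉ delVertices bd S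
              · refine ⟨⟨e, h⟩, ⟨(mem_subBd bd S).mpr hve, ?_⟩, rfl⟩
                have key : extLab bd S l e = l ⟨e, h⟩ := extLab_subEdge bd S ⟨e, h⟩
                rw [← key]; exact hne
              · push_neg at h
                exact absurd (extLab_of_not bd S (hnotS e hve) (h (hnotS e hve))) hne
            · rintro ⟨e', ⟨hw, hne⟩, rfl⟩
              exact ⟨(mem_subBd bd S).mp hw, by
                rw [extLab_subEdge bd S e']; exact hne⟩
         rw [hseteq, Set.ncard_image_of_injective _ Subtype.val_injective]
         exact hl.2.2 ⟨v, hv⟩)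
  }

/-- Restriction: a dimer labeling of `Γ` that is 1/2 on cycle edges and 0 on edges
adjacent to deleted vertices restricts to a dimer labeling of the subgraph, and the
extension of the restriction is the original labeling. -/
private lemma restrict_isDimerLabeling [Fintype E] {m : E → ℝ}
    (hm : IsDimerLabeling bd m) (h1 : ∀ e ∈ ⋃₀ S, m e = 1 / 2)
    (h0 : ∀ e, e ∉ ⋃₀ S → (∃ v ∈ bd e, v ∈ delVertices bd S) → m e = 0) :
    IsDimerLabeling (subBd bd S) (fun e' : SubEdge bd S => m e'.1) ∧
      extLab bd S (fun e' : SubEdge bd S => m e'.1) = m := by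
  constructor
  · refine ⟨fun e' => hm.1 e'.1, ?_, ?_⟩
    · rintro ⟨v, hv⟩
      have hnotS : ∀ e : E, v ∈ bd e → e ∉ ⋃₀ S := by
        intro e hve ⟨c, hc, hec⟩
        exact hv ⟨c, hc, e, hec, hve⟩
      have himg : ∑ᶠ e ∈ {e : E | v ∈ bd e}, m e
          = ∑ᶠ e ∈ (Subtype.val ''
              {e' : SubEdge bd S | (⟨v, hv⟩ : SubVertex bd S) ∈ subBd bd S e'}), m e := by
        refine finsum_mem_zero_subset _ ?_ ?_
        · rintro e ⟨e', he', rfl⟩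
          exact (mem_subBd bd S).mp he'
        · intro e hve hni
          by_cases h : e ∉ ⋃₀ S ∧ ∀ v' ∈ bd e, v' ∉ delVertices bd S
          · exact absurd ⟨⟨e, h⟩, (mem_subBd bd S).mpr hve, rfl⟩ hni
          · push_neg at h
            obtain ⟨v', hv', hdel⟩ := h (hnotS e hve)
            exact h0 e (hnotS e hve) ⟨v', hv', hdel⟩
      have := hm.2.1 v
      rw [himg, finsum_mem_image (Set.injOn_of_injective Subtype.val_injective)] at this
      exact this
    · rintro ⟨v, hv⟩
      have : {e' : SubEdge bd S |
            (⟨v, hv⟩ : SubVertex bd S) ∈ subBd bd S e' ∧ m e'.1 ≠ 0}.ncard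
          = (Subtype.val '' {e' : SubEdge bd S |
              (⟨v, hv⟩ : SubVertex bd S) ∈ subBd bd S e' ∧ m e'.1 ≠ 0}).ncard :=
        (Set.ncard_image_of_injective _ Subtype.val_injective).symm
      rw [this]
      refine le_trans (Set.ncard_le_ncard ?_ (Set.toFinite _)) (hm.2.2 v)
      rintro e ⟨e', ⟨hw, hne⟩, rfl⟩
      exact ⟨(mem_subBd bd S).mp hw, hne⟩
  · funext e
    by_cases heS : e ∈ ⋃₀ S
    · rw [extLab_of_mem bd S heS, h1 e heS]
    · by_cases h : e ∉ ⋃₀ S ∧ ∀ v' ∈ bd e, v' ∉ delVertices bd S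
      · exact extLab_subEdge bd S (⟨e, h⟩ : SubEdge bd S)
      · push_neg at h
        obtain ⟨v', hv', hdel⟩ := h heS
        rw [extLab_of_not bd S heS ⟨v', hv', hdel⟩]
        exact (h0 e heS ⟨v', hv', hdel⟩).symm

end Aux

/-- for a finite set `S` of pairwise independent odd cycles of a
finite graph `Γ`, the extension map `i : L(Γ_S) → L(Γ)` is a topological embedding
whose image is a union of path components of `L(Γ)`; moreover if `Γ_S` admits a
dimer covering then `i(L₀(Γ_S))` is a single path component of `L(Γ)`. -/
theorem subgraph_labelings_embed [Fintype E] [Fintype V]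
    (bd : E → Finset V) (hbd : ∀ e, (bd e).card = 2)
    (S : Set (Set E)) (hfin : S.Finite)
    (hodd : ∀ s ∈ S, IsOddCycle bd s) (hindep : S.Pairwise (Indep bd)) :
    ∃ i : DimerLab (subBd bd S) → DimerLab bd,
      (∀ l : DimerLab (subBd bd S), (i l).1 = extLab bd S l.1) ∧
      Topology.IsEmbedding i ∧
      (∀ x ∈ Set.range i, pathComponent x ⊆ Set.range i) ∧
      (∀ A₀ : Set (SubEdge bd S), IsDimer (subBd bd S) A₀ →
        ∀ hδ : IsDimerLabeling (subBd bd S) (dimerDelta A₀),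
          i '' pathComponent ⟨dimerDelta A₀, hδ⟩ =
            pathComponent (i ⟨dimerDelta A₀, hδ⟩)) := by
  classical
  set i : DimerLab (subBd bd S) → DimerLab bd :=
    fun l => ⟨extLab bd S l.1, extLab_isDimerLabeling bd S hodd hindep l.2⟩ with hidef
  have hcont : Continuous i := by
    refine Continuous.subtype_mk ?_ _
    refine continuous_pi fun e => ?_
    simp only [extLab]
    split_ifs with h1 h2
    · exact continuous_const
    · exact (continuous_apply _).comp continuous_subtype_val
    · exact continuous_const
  have hemb : Topology.IsEmbedding i := by
    have hg : Continuous fun m : DimerLab bd => fun e' : SubEdge bd S => m.1 e'.1 :=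
      continuous_pi fun e' => (continuous_apply e'.1).comp continuous_subtype_val
    refine Topology.IsEmbedding.of_comp hcont hg ?_
    have : (fun m : DimerLab bd => fun e' : SubEdge bd S => m.1 e'.1) ∘ i
        = Subtype.val := by
      funext l
      funext e'
      exact extLab_subEdge bd S e'
    rw [this]
    exact Topology.IsEmbedding.subtypeVal
  have hrange : Set.range i = {m : DimerLab bd | ∀ e ∈ ⋃₀ S, m.1 e ≠ 0} := by
    ext m
    constructor
    · rintro ⟨l, rfl⟩ e he
      show extLab bd S l.1 e ≠ 0
      rw [extLab_of_mem bd S he]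
      norm_num
    · intro hm
      obtain ⟨h1, h0⟩ := core_rigid bd S hodd hindep m.2 hm
      obtain ⟨hdl, hext⟩ := restrict_isDimerLabeling bd S m.2 h1 h0
      exact ⟨⟨fun e' => m.1 e'.1, hdl⟩, Subtype.ext hext⟩
  have hrange2 : Set.range i = {m : DimerLab bd | ∀ e ∈ ⋃₀ S, m.1 e = 1 / 2} := by
    refine Set.Subset.antisymm ?_ ?_
    · intro m hm
      obtain ⟨l, rfl⟩ := hm
      intro e he
      exact extLab_of_mem bd S he
    · intro m hm
      rw [hrange]
      intro e he
      rw [hm e he]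
      norm_num
  have hopen : IsOpen (Set.range i) := by
    rw [hrange]
    have heq : {m : DimerLab bd | ∀ e ∈ ⋃₀ S, m.1 e ≠ 0}
        = ⋂ e : E, {m : DimerLab bd | e ∈ ⋃₀ S → m.1 e ≠ 0} := by
      ext m; simp
    rw [heq]
    refine isOpen_iInter_of_finite fun e => ?_
    by_cases he : e ∈ ⋃₀ S
    · have : {m : DimerLab bd | e ∈ ⋃₀ S → m.1 e ≠ 0}
          = (fun m : DimerLab bd => m.1 e) ⁻¹' {x : ℝ | x ≠ 0} := by
        ext m; simp [he]
      rw [this]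
      exact isOpen_ne.preimage ((continuous_apply e).comp continuous_subtype_val)
    · have : {m : DimerLab bd | e ∈ ⋃₀ S → m.1 e ≠ 0} = Set.univ := by
        ext m; simp [he]
      rw [this]
      exact isOpen_univ
  have hclosed : IsClosed (Set.range i) := by
    rw [hrange2]
    have heq : {m : DimerLab bd | ∀ e ∈ ⋃₀ S, m.1 e = 1 / 2}
        = ⋂ e : E, {m : DimerLab bd | e ∈ ⋃₀ S → m.1 e = 1 / 2} := by
      ext m; simp
    rw [heq]
    refine isClosed_iInter fun e => ?_
    by_cases he : e ∈ ⋃₀ S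
    · have : {m : DimerLab bd | e ∈ ⋃₀ S → m.1 e = 1 / 2}
          = {m : DimerLab bd | m.1 e = 1 / 2} := by
        ext m; simp [he]
      rw [this]
      exact isClosed_eq ((continuous_apply e).comp continuous_subtype_val)
        continuous_const
    · have : {m : DimerLab bd | e ∈ ⋃₀ S → m.1 e = 1 / 2} = Set.univ := by
        ext m; simp [he]
      rw [this]
      exact isClosed_univ
  have hunion : ∀ x ∈ Set.range i, pathComponent x ⊆ Set.range i := by
    intro x hx
    refine IsPreconnected.subset_isClopen ?_ ⟨hclosed, hopen⟩
      ⟨x, mem_pathComponent_self x, hx⟩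
    exact (isPathConnected_pathComponent.isConnected).isPreconnected
  have hcomp : ∀ x : DimerLab (subBd bd S),
      i '' pathComponent x = pathComponent (i x) := by
    intro x
    apply Set.Subset.antisymm
    · rintro _ ⟨l, hl, rfl⟩
      obtain ⟨γ⟩ := hl
      exact ⟨γ.map hcont⟩
    · intro y hy
      have hyr : y ∈ Set.range i := hunion (i x) ⟨x, rfl⟩ hy
      obtain ⟨γ⟩ := hy
      have hmem : ∀ t : unitInterval, γ t ∈ Set.range i := by
        intro t
        refine hunion (i x) ⟨x, rfl⟩ ?_
        refine ⟨(γ.truncate 0 t).cast ?_ ?_⟩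
        · rw [min_eq_left t.2.1, Path.extend_zero]
        · exact (γ.extend_extends' t).symm
      obtain ⟨l, hly⟩ := hyr
      refine ⟨l, ?_, hly⟩
      have hJ : JoinedIn (Set.range i) (i x) y := ⟨γ, fun t => hmem t⟩
      obtain ⟨δ⟩ := hJ.joined_subtype
      set h : DimerLab (subBd bd S) ≃ₜ ↥(Set.range i) :=
        hemb.toHomeomorph with hhdef
      have happ : ∀ a, ((h a : DimerLab bd)) = i a := by
        intro a
        simp [hhdef, Topology.IsEmbedding.toHomeomorph]
      have key : ∀ z : ↥(Set.range i), i (h.symm z) = (z : DimerLab bd) := by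
        intro z
        rw [← happ (h.symm z), h.apply_symm_apply]
      exact ⟨(δ.map h.symm.continuous).cast
        (hemb.injective (key _)).symm
        (hemb.injective ((key _).trans hly.symm)).symm⟩
  exact ⟨i, fun l => rfl, hemb, hunion, fun A₀ _ hδ => hcomp ⟨dimerDelta A₀, hδ⟩⟩
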